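/- Let A, B be n×n positive semidefinite Hermitian matrices with eigenvalues λ₁(·) ≥ ⋯ ≥ λ_n(·). If the eigenvalue vector of A is weakly majorized by a convex combination (or integral average) ∫ λ⃗(D_τ) dν(τ) of eigenvalue vectors of a measurable family of Hermitian matrices D_τ, and f : ℝ → [0,∞) is non-decreasing and convex, then for every unitarily invariant norm ‖·‖_ρ, ‖f(A)‖_ρ ≤ ∫ ‖f(D_τ)‖_ρ dν(τ). Conversely, if this norm inequality holds for all unitarily invariant norms and the function f(x) = max{x + c, 0} for all large c > 0, then λ⃗(A) ≺_w ∫ λ⃗(D_τ) dν(τ). -/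

import Mathlib

open MeasureTheory

/-- Sorted (descending) eigenvalues of a Hermitian matrix. -/
noncomputable def eigsDesc {n : ℕ} {A : Matrix (Fin n) (Fin n) ℂ} (hA : A.IsHermitian) :
    Fin n → ℝ :=
  fun j => hA.eigenvalues (Tuple.sort hA.eigenvalues j.rev)

/-- A symmetric gauge function on `ℝ^r`: nonnegative, absolutely homogeneous,
subadditive, permutation invariant, and absolute. Symmetric gauge functions
correspond bijectively to unitarily invariant norms `‖H‖_ρ = ρ(λ⃗(|H|))`. -/
def IsSymmetricGauge {r : ℕ} (ρ : (Fin r → ℝ) → ℝ) : Prop :=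
  (∀ v, 0 ≤ ρ v) ∧ (∀ (c : ℝ) v, ρ (c • v) = |c| * ρ v) ∧
  (∀ v w, ρ (v + w) ≤ ρ v + ρ w) ∧
  (∀ (σ : Equiv.Perm (Fin r)) v, ρ (v ∘ σ) = ρ v) ∧
  (∀ v, ρ (fun i => |v i|) = ρ v)

section AuxAll
variable {n : ℕ} {ρ : (Fin n → ℝ) → ℝ}

lemma eigsDesc_antitone {A : Matrix (Fin n) (Fin n) ℂ} (hA : A.IsHermitian) :
    Antitone (eigsDesc hA) := by
  intro a b hab
  exact Tuple.monotone_sort hA.eigenvalues (Fin.rev_le_rev.mpr hab)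

lemma absSum_gauge : IsSymmetricGauge (fun v : Fin n → ℝ => ∑ i, |v i|) := by
  refine ⟨fun v => Finset.sum_nonneg fun i _ => abs_nonneg _, ?_, ?_, ?_, ?_⟩
  · intro c v
    simp only [Pi.smul_apply, smul_eq_mul, abs_mul, Finset.mul_sum]
  · intro v w
    rw [← Finset.sum_add_distrib]
    exact Finset.sum_le_sum fun i _ => abs_add_le _ _
  · intro σ v
    exact Equiv.sum_comp σ (fun i => |v i|)
  · intro v
    exact Finset.sum_congr rfl fun i _ => abs_abs (v i)

lemma max_eq_add_maxneg (a : ℝ) : max a 0 = a + max (-a) 0 := by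
  rcases le_total a 0 with h | h
  · rw [max_eq_right h, max_eq_left (by linarith)]; ring
  · rw [max_eq_left h, max_eq_right (by linarith)]; ring

lemma int_maxpos {Ω : Type*} [MeasurableSpace Ω] {ν : Measure Ω} {g : Ω → ℝ}
    (hg : Integrable g ν) : Integrable (fun τ => max (g τ) 0) ν := by
  have : (fun τ => max (g τ) 0) = fun τ => (g τ + |g τ|) / 2 := by
    funext τ
    rcases le_total (g τ) 0 with h | h
    · rw [max_eq_right h, abs_of_nonpos h]; ring
    · rw [max_eq_left h, abs_of_nonneg h]; ring
  rw [this]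
  exact (hg.add hg.abs).div_const 2

lemma SG.zero (h : IsSymmetricGauge ρ) : ρ 0 = 0 := by
  have := h.2.1 0 0
  simpa using this

lemma SG.combo (h : IsSymmetricGauge ρ) {a b : ℝ} (v w : Fin n → ℝ) (ha : 0 ≤ a) (hb : 0 ≤ b) :
    ρ (a • v + b • w) ≤ a * ρ v + b * ρ w := by
  calc ρ (a • v + b • w) ≤ ρ (a • v) + ρ (b • w) := h.2.2.1 _ _
  _ = a * ρ v + b * ρ w := by rw [h.2.1, h.2.1, abs_of_nonneg ha, abs_of_nonneg hb]

lemma SG.abs_congr (h : IsSymmetricGauge ρ) {v w : Fin n → ℝ} (hvw : ∀ i, |v i| = |w i|) :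
    ρ v = ρ w := by
  rw [← h.2.2.2.2 v, ← h.2.2.2.2 w]
  congr 1; funext i; exact hvw i

lemma SG.update_le (h : IsSymmetricGauge ρ) (w : Fin n → ℝ) (i : Fin n) (t : ℝ)
    (ht : |t| ≤ |w i|) : ρ (Function.update w i t) ≤ ρ w := by
  rcases eq_or_lt_of_le (abs_nonneg (w i)) with h0 | h0
  · have ht0 : t = 0 := by
      have : |t| ≤ 0 := by linarith
      simpa [abs_nonpos_iff] using this
    have hw0 : w i = 0 := by
      have : |w i| = 0 := h0.symm
      simpa [abs_eq_zero] using this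
    have : Function.update w i t = w := by
      funext k; by_cases hk : k = i
      · subst hk; simp [ht0, hw0]
      · simp [Function.update_of_ne hk]
    rw [this]
  · set a : ℝ := (t + |w i|) / (2 * |w i|) with ha
    have h2 : (0:ℝ) < 2 * |w i| := by positivity
    have ha0 : 0 ≤ a := by
      apply div_nonneg _ h2.le
      have := neg_abs_le t; linarith [abs_nonneg (w i)]
    have ha1 : a ≤ 1 := by
      rw [div_le_one h2]
      have := le_abs_self t; linarith
    have key : Function.update w i t = a • (Function.update w i |w i|) +
        (1 - a) • (Function.update w i (-|w i|)) := by
      funext k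
      by_cases hk : k = i
      · subst hk
        simp only [Function.update_self, Pi.add_apply, Pi.smul_apply, smul_eq_mul]
        rw [ha]; field_simp
        ring
      · simp [Function.update_of_ne hk, Pi.add_apply]
        ring
    rw [key]
    have e1 : ρ (Function.update w i |w i|) = ρ w := by
      apply SG.abs_congr h
      intro k
      by_cases hk : k = i
      · subst hk; simp
      · simp [Function.update_of_ne hk]
    have e2 : ρ (Function.update w i (-|w i|)) = ρ w := by
      apply SG.abs_congr h
      intro k
      by_cases hk : k = i
      · subst hk; simp
      · simp [Function.update_of_ne hk]
    calc ρ _ ≤ a * ρ (Function.update w i |w i|) + (1-a) * ρ (Function.update w i (-|w i|)) :=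
          SG.combo h _ _ ha0 (by linarith)
    _ = ρ w := by rw [e1, e2]; ring

lemma SG.mono_abs (h : IsSymmetricGauge ρ) {u w : Fin n → ℝ} (huw : ∀ i, |u i| ≤ |w i|) :
    ρ u ≤ ρ w := by
  classical
  have key : ∀ s : Finset (Fin n), ρ (s.piecewise u w) ≤ ρ w := by
    intro s
    induction s using Finset.induction with
    | empty => simp
    | @insert i s his ih =>
      rw [Finset.piecewise_insert]
      have : |u i| ≤ |s.piecewise u w i| := by
        rw [Finset.piecewise_eq_of_notMem _ _ _ his]; exact huw i
      exact le_trans (SG.update_le h _ i (u i) this) ih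
  have := key Finset.univ
  simpa using this

lemma SG.sum_le (h : IsSymmetricGauge ρ) {ι : Type*} (s : Finset ι) (g : ι → (Fin n → ℝ)) :
    ρ (∑ i ∈ s, g i) ≤ ∑ i ∈ s, ρ (g i) := by
  classical
  induction s using Finset.induction with
  | empty => simp [SG.zero h]
  | @insert i s his ih =>
    rw [Finset.sum_insert his, Finset.sum_insert his]
    exact le_trans (h.2.2.1 _ _) (by linarith)

lemma SG.le_add (h : IsSymmetricGauge ρ) (u v : Fin n → ℝ) : ρ u ≤ ρ (u - v) + ρ v := by
  have := h.2.2.1 (u - v) v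
  simpa using this

lemma SG.continuous (h : IsSymmetricGauge ρ) : Continuous ρ := by
  classical
  set C : ℝ := ∑ i : Fin n, ρ (Function.update (0 : Fin n → ℝ) i 1) with hC
  have hbound : ∀ v : Fin n → ℝ, ρ v ≤ C * ‖v‖ := by
    intro v
    have hv : v = ∑ i : Fin n, (v i) • (Function.update (0 : Fin n → ℝ) i 1) := by
      funext k
      simp only [Finset.sum_apply, Pi.smul_apply, smul_eq_mul]
      rw [Finset.sum_eq_single k]
      · simp
      · intro b _ hb; simp [Function.update_of_ne (Ne.symm hb)]
      · simp
    calc ρ v = ρ (∑ i : Fin n, (v i) • (Function.update (0 : Fin n → ℝ) i 1)) := by rw [← hv]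
    _ ≤ ∑ i : Fin n, ρ ((v i) • (Function.update (0 : Fin n → ℝ) i 1)) := SG.sum_le h _ _
    _ = ∑ i : Fin n, |v i| * ρ (Function.update (0 : Fin n → ℝ) i 1) := by
        simp_rw [h.2.1]
    _ ≤ ∑ i : Fin n, ‖v‖ * ρ (Function.update (0 : Fin n → ℝ) i 1) := by
        apply Finset.sum_le_sum
        intro i _
        exact mul_le_mul_of_nonneg_right (by simpa using norm_le_pi_norm v i) (h.1 _)
    _ = C * ‖v‖ := by rw [← Finset.mul_sum]; rw [mul_comm]
  rw [Metric.continuous_iff]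
  intro v ε hε
  rcases le_or_gt C 0 with hC0 | hC0
  · refine ⟨1, one_pos, fun w _ => ?_⟩
    have h1 : ρ w ≤ 0 := le_trans (hbound w) (mul_nonpos_of_nonpos_of_nonneg hC0 (norm_nonneg _))
    have h2 : ρ v ≤ 0 := le_trans (hbound v) (mul_nonpos_of_nonpos_of_nonneg hC0 (norm_nonneg _))
    have h1' := h.1 w; have h2' := h.1 v
    have : ρ w = ρ v := by linarith
    simpa [Real.dist_eq, this] using hε
  · refine ⟨ε / C, by positivity, fun w hw => ?_⟩
    rw [Real.dist_eq, abs_lt]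
    have k1 : ρ w ≤ ρ (w - v) + ρ v := SG.le_add h w v
    have k2 : ρ v ≤ ρ (v - w) + ρ w := SG.le_add h v w
    have e : ρ (v - w) = ρ (w - v) := by
      rw [← h.2.2.2.2 (v - w), ← h.2.2.2.2 (w - v)]
      congr 1; funext i; simp [abs_sub_comm]
    have hb : ρ (w - v) ≤ C * ‖w - v‖ := hbound _
    have hd : ‖w - v‖ < ε / C := by rwa [← dist_eq_norm]
    have : C * ‖w - v‖ < ε := by
      calc C * ‖w - v‖ < C * (ε / C) := by exact mul_lt_mul_of_pos_left hd hC0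
      _ = ε := by field_simp
    constructor <;> nlinarith [h.1 (w - v)]

noncomputable def pfx {n : ℕ} (u : Fin n → ℝ) (k : ℕ) : ℝ :=
  ∑ j ∈ Finset.range k, if h : j < n then u ⟨j, h⟩ else 0

variable {n : ℕ} {ρ : (Fin n → ℝ) → ℝ}

lemma pfx_succ (u : Fin n → ℝ) (k : ℕ) :
    pfx u (k+1) = pfx u k + (if h : k < n then u ⟨k, h⟩ else 0) := Finset.sum_range_succ _ _

lemma pfx_succ_of_lt (u : Fin n → ℝ) {k : ℕ} (hk : k < n) :
    pfx u (k+1) = pfx u k + u ⟨k, hk⟩ := by rw [pfx_succ, dif_pos hk]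

lemma pfx_eq_fin_sum {k : ℕ} (hk : k ≤ n) (u : Fin n → ℝ) :
    ∑ j : Fin k, u (Fin.castLE hk j) = pfx u k := by
  rw [pfx, Finset.sum_range]
  apply Finset.sum_congr rfl
  intro j _
  rw [dif_pos (lt_of_lt_of_le j.isLt hk)]
  rfl

lemma pfx_congr {u w : Fin n → ℝ} {k : ℕ}
    (h : ∀ t : Fin n, (t : ℕ) < k → u t = w t) : pfx u k = pfx w k := by
  apply Finset.sum_congr rfl
  intro t ht
  rw [Finset.mem_range] at ht
  by_cases h' : t < n
  · rw [dif_pos h', dif_pos h']; exact h ⟨t, h'⟩ ht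
  · rw [dif_neg h', dif_neg h']


lemma pfx_stable (u : Fin n → ℝ) {k : ℕ} (hk : n ≤ k) : pfx u k = pfx u n := by
  rw [pfx, pfx]
  refine (Finset.sum_subset (Finset.range_subset_range.mpr hk) ?_).symm
  intro t _ htn
  rw [Finset.mem_range, not_lt] at htn
  rw [dif_neg (not_lt.mpr htn)]

lemma SG.schur (h : IsSymmetricGauge ρ) (d : ℕ) :
    ∀ u w : Fin n → ℝ,
      (Finset.univ.filter fun i => u i ≠ w i).card ≤ d →
      (∀ i, 0 ≤ u i) → (∀ i, 0 ≤ w i) → Antitone u → Antitone w →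
      (∀ k : ℕ, pfx u k ≤ pfx w k) → ρ u ≤ ρ w := by
  classical
  induction d with
  | zero =>
    intro u w hcard hu0 hw0 hua hwa hsum
    have : u = w := by
      funext i
      by_contra hne
      have : i ∈ Finset.univ.filter fun i => u i ≠ w i := by simp [hne]
      have := Finset.card_pos.mpr ⟨i, this⟩
      omega
    rw [this]
  | succ d ih =>
    intro u w hcard hu0 hw0 hua hwa hsum
    by_cases hle : ∀ i, u i ≤ w i
    · exact SG.mono_abs h fun i => by
        rw [abs_of_nonneg (hu0 i), abs_of_nonneg (hw0 i)]; exact hle i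
    push_neg at hle
    -- T : set of violators
    set T : Finset (Fin n) := Finset.univ.filter fun t => w t < u t with hT
    have hTne : T.Nonempty := by
      obtain ⟨t, ht⟩ := hle
      exact ⟨t, by simp [hT, ht]⟩
    set j : Fin n := T.min' hTne with hj
    have hjT : w j < u j := by
      have := T.min'_mem hTne
      simpa [hT] using this
    have hnotT : ∀ t : Fin n, t < j → u t ≤ w t := by
      intro t ht
      by_contra hc
      push_neg at hc
      have : t ∈ T := by simp [hT, hc]
      exact absurd (T.min'_le t this) (not_le.mpr ht)
    -- existence of an index i < j with u i < w i
    have hIex : ∃ t : Fin n, t < j ∧ u t < w t := by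
      by_contra hc
      push_neg at hc
      have heq : ∀ t : Fin n, t < j → u t = w t := fun t ht =>
        le_antisymm (hnotT t ht) (hc t ht)
      have h1 : pfx u j.val = pfx w j.val := by
        apply pfx_congr
        intro t ht
        exact heq t ht
      have h2 := hsum (j.val + 1)
      rw [pfx_succ_of_lt u j.isLt, pfx_succ_of_lt w j.isLt] at h2
      have : u ⟨j.val, j.isLt⟩ ≤ w ⟨j.val, j.isLt⟩ := by linarith [h1]
      simp only [Fin.eta] at this
      linarith
    set I : Finset (Fin n) := Finset.univ.filter fun t => t < j ∧ u t < w t with hI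
    have hIne : I.Nonempty := by
      obtain ⟨t, h1, h2⟩ := hIex
      exact ⟨t, by simp [hI, h1, h2]⟩
    set i : Fin n := I.max' hIne with hi
    have hiI := Finset.mem_filter.mp (I.max'_mem hIne)
    obtain ⟨hij, hui⟩ := hiI.2
    have hmid : ∀ t : Fin n, i < t → t < j → u t = w t := by
      intro t hit htj
      have h1 : u t ≤ w t := hnotT t htj
      rcases eq_or_lt_of_le h1 with h2 | h2
      · exact h2
      · have : t ∈ I := by simp [hI, htj, h2]
        exact absurd (I.le_max' t this) (not_le.mpr hit)
    set δ : ℝ := min (w i - u i) (u j - w j) with hδ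
    have hδ0 : 0 < δ := lt_min (by linarith) (by linarith)
    have hδ1 : δ ≤ w i - u i := min_le_left _ _
    have hδ2 : δ ≤ u j - w j := min_le_right _ _
    have hinej : i ≠ j := ne_of_lt hij
    set w' : Fin n → ℝ := Function.update (Function.update w i (w i - δ)) j (w j + δ) with hw'
    have hw'i : w' i = w i - δ := by
      rw [hw', Function.update_of_ne hinej, Function.update_self]
    have hw'j : w' j = w j + δ := by rw [hw', Function.update_self]
    have hw't : ∀ t : Fin n, t ≠ i → t ≠ j → w' t = w t := by
      intro t h1 h2
      rw [hw', Function.update_of_ne h2, Function.update_of_ne h1]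
    -- basic chains
    have huij : u j ≤ u i := hua hij.le
    have hwij : w j < w i := by linarith
    have hw'i_ge : u i ≤ w' i := by rw [hw'i]; linarith
    have hw'j_le : w' j ≤ u j := by rw [hw'j]; linarith
    -- ρ w' ≤ ρ w
    have hρw' : ρ w' ≤ ρ w := by
      set a : ℝ := (w i - δ - w j) / (w i - w j) with ha
      have hden : (0:ℝ) < w i - w j := by linarith
      have ha0 : 0 ≤ a := div_nonneg (by linarith) hden.le
      have ha1 : a ≤ 1 := by rw [div_le_one hden]; linarith
      have key : w' = a • w + (1 - a) • (w ∘ (Equiv.swap i j)) := by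
        funext t
        simp only [Pi.add_apply, Pi.smul_apply, smul_eq_mul, Function.comp_apply]
        by_cases h1 : t = i
        · subst h1
          rw [Equiv.swap_apply_left, hw'i]
          rw [ha]; field_simp
          ring
        by_cases h2 : t = j
        · subst h2
          rw [Equiv.swap_apply_right, hw'j]
          rw [ha]; field_simp
          ring
        · rw [Equiv.swap_apply_of_ne_of_ne h1 h2, hw't t h1 h2]
          ring
      rw [key]
      calc ρ _ ≤ a * ρ w + (1 - a) * ρ (w ∘ (Equiv.swap i j)) :=
            SG.combo h _ _ ha0 (by linarith)
      _ = ρ w := by rw [h.2.2.2.1 (Equiv.swap i j) w]; ring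
    -- w' nonneg
    have hw'0 : ∀ t, 0 ≤ w' t := by
      intro t
      by_cases h1 : t = i
      · subst h1; rw [hw'i]; linarith [hu0 i]
      by_cases h2 : t = j
      · subst h2; rw [hw'j]; linarith [hw0 j]
      · rw [hw't t h1 h2]; exact hw0 t
    -- w' antitone
    have hw'a : Antitone w' := by
      intro a b hab
      rcases eq_or_lt_of_le hab with rfl | hab'
      · exact le_refl _
      by_cases hbi : b = i
      · subst hbi
        have h1 : w' a = w a := hw't a (ne_of_lt hab') (ne_of_lt (lt_trans hab' hij))
        rw [h1, hw'i]
        have : w i ≤ w a := hwa hab'.le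
        linarith
      by_cases hbj : b = j
      · subst hbj
        by_cases hai : a = i
        · subst hai; rw [hw'i, hw'j]; linarith
        · have h1 : w' a = w a := hw't a hai (ne_of_lt hab')
          rw [h1, hw'j]
          have h2 : u j ≤ w a := by
            rcases lt_or_ge i a with hia | hia
            · rw [← hmid a hia hab']
              exact hua hab'.le
            · have hia' : a < i := lt_of_le_of_ne hia hai
              have : w i ≤ w a := hwa hia'.le
              linarith
          linarith
      by_cases hai : a = i
      · subst hai
        have hb : w' b = w b := hw't b hbi hbj
        rw [hb, hw'i]
        rcases lt_or_ge b j with hbj' | hbj'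
        · rw [← hmid b hab' hbj']
          have : u b ≤ u i := hua hab'.le
          linarith
        · have hjb : j < b := lt_of_le_of_ne hbj' (Ne.symm hbj)
          have h3 : w b ≤ w j := hwa hjb.le
          linarith
      by_cases haj : a = j
      · subst haj
        have hb : w' b = w b := hw't b hbi hbj
        rw [hb, hw'j]
        have : w b ≤ w j := hwa hab'.le
        linarith
      · rw [hw't a hai haj, hw't b hbi hbj]; exact hwa hab
    -- prefix sums for w'
    set g : ℕ → ℝ := fun t =>
      (if h : t < n then w' ⟨t, h⟩ else 0) - (if h : t < n then w ⟨t, h⟩ else 0) with hg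
    have hgz : ∀ t : ℕ, t ≠ (i : ℕ) → t ≠ (j : ℕ) → g t = 0 := by
      intro t h1 h2
      simp only [hg]
      by_cases ht : t < n
      · rw [dif_pos ht, dif_pos ht, hw't ⟨t, ht⟩ (by simpa [Fin.ext_iff] using h1)
          (by simpa [Fin.ext_iff] using h2)]
        ring
      · rw [dif_neg ht, dif_neg ht]; ring
    have hgi : g (i : ℕ) = -δ := by
      simp only [hg, dif_pos i.isLt, Fin.eta]
      rw [hw'i]; ring
    have hgj : g (j : ℕ) = δ := by
      simp only [hg, dif_pos j.isLt, Fin.eta]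
      rw [hw'j]; ring
    have hpfxg : ∀ k : ℕ, pfx w' k = pfx w k + ∑ t ∈ Finset.range k, g t := by
      intro k
      rw [pfx, pfx, hg, ← Finset.sum_add_distrib]
      apply Finset.sum_congr rfl
      intro t _
      ring
    have hijval : (i : ℕ) < (j : ℕ) := hij
    have hkey : ∀ m : ℕ, (i : ℕ) + 1 ≤ m → m ≤ (j : ℕ) → δ ≤ pfx w m - pfx u m := by
      intro m hm
      induction m, hm using Nat.le_induction with
      | base =>
        intro _
        rw [pfx_succ_of_lt w i.isLt, pfx_succ_of_lt u i.isLt]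
        simp only [Fin.eta]
        have := hsum (i : ℕ)
        linarith
      | succ m hm ihm =>
        intro hmj
        have hmj' : m < (j : ℕ) := by omega
        have hmn : m < n := lt_trans hmj' j.isLt
        rw [pfx_succ_of_lt w hmn, pfx_succ_of_lt u hmn]
        have heqm : u ⟨m, hmn⟩ = w ⟨m, hmn⟩ := by
          apply hmid
          · exact (by omega : (i:ℕ) < m)
          · exact hmj'
        have := ihm (by omega)
        linarith
    have hpfx' : ∀ k : ℕ, pfx u k ≤ pfx w' k := by
      intro k
      rcases le_or_gt k (i : ℕ) with hk | hk
      · have : ∑ t ∈ Finset.range k, g t = 0 := by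
          apply Finset.sum_eq_zero
          intro t ht
          rw [Finset.mem_range] at ht
          exact hgz t (by omega) (by omega)
        rw [hpfxg k, this]
        simpa using hsum k
      rcases le_or_gt k (j : ℕ) with hk2 | hk2
      · have : ∑ t ∈ Finset.range k, g t = -δ := by
          rw [Finset.sum_eq_single (i : ℕ)]
          · exact hgi
          · intro t ht htne
            rw [Finset.mem_range] at ht
            exact hgz t htne (by omega)
          · intro hni
            exact absurd (Finset.mem_range.mpr hk) hni
        rw [hpfxg k, this]
        have := hkey k (by omega) hk2
        linarith
      · have hsub : ({(i : ℕ), (j : ℕ)} : Finset ℕ) ⊆ Finset.range k := by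
          intro t ht
          simp only [Finset.mem_insert, Finset.mem_singleton] at ht
          rw [Finset.mem_range]
          rcases ht with rfl | rfl <;> omega
        have : ∑ t ∈ Finset.range k, g t = 0 := by
          rw [← Finset.sum_subset hsub]
          · rw [Finset.sum_pair (by omega : (i:ℕ) ≠ (j:ℕ)), hgi, hgj]; ring
          · intro t _ htns
            simp only [Finset.mem_insert, Finset.mem_singleton] at htns
            push_neg at htns
            exact hgz t htns.1 htns.2
        rw [hpfxg k, this]
        simpa using hsum k
    -- cardinality decreases
    have hcard' : (Finset.univ.filter fun t => u t ≠ w' t).card ≤ d := by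
      rcases le_total (w i - u i) (u j - w j) with hc | hc
      · have hδeq : δ = w i - u i := min_eq_left hc
        have hzmem : i ∈ Finset.univ.filter fun t => u t ≠ w t := by
          simp; exact ne_of_lt hui
        have hsub : (Finset.univ.filter fun t => u t ≠ w' t) ⊆
            (Finset.univ.filter fun t => u t ≠ w t).erase i := by
          intro t ht
          rw [Finset.mem_filter] at ht
          rw [Finset.mem_erase, Finset.mem_filter]
          have hti : t ≠ i := by
            rintro rfl
            apply ht.2
            rw [hw'i, hδeq]; ring
          refine ⟨hti, Finset.mem_univ t, ?_⟩
          by_cases htj : t = j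
          · subst htj; exact ne_of_gt hjT
          · rw [← hw't t hti htj]; exact ht.2
        calc (Finset.univ.filter fun t => u t ≠ w' t).card
            ≤ ((Finset.univ.filter fun t => u t ≠ w t).erase i).card :=
              Finset.card_le_card hsub
        _ = (Finset.univ.filter fun t => u t ≠ w t).card - 1 :=
              Finset.card_erase_of_mem hzmem
        _ ≤ d := by omega
      · have hδeq : δ = u j - w j := min_eq_right hc
        have hzmem : j ∈ Finset.univ.filter fun t => u t ≠ w t := by
          simp [ne_of_gt hjT]
        have hsub : (Finset.univ.filter fun t => u t ≠ w' t) ⊆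
            (Finset.univ.filter fun t => u t ≠ w t).erase j := by
          intro t ht
          rw [Finset.mem_filter] at ht
          rw [Finset.mem_erase, Finset.mem_filter]
          have htj : t ≠ j := by
            rintro rfl
            apply ht.2
            rw [hw'j, hδeq]; ring
          refine ⟨htj, Finset.mem_univ t, ?_⟩
          by_cases hti : t = i
          · subst hti; exact ne_of_lt hui
          · rw [← hw't t hti htj]; exact ht.2
        calc (Finset.univ.filter fun t => u t ≠ w' t).card
            ≤ ((Finset.univ.filter fun t => u t ≠ w t).erase j).card :=
              Finset.card_le_card hsub
        _ = (Finset.univ.filter fun t => u t ≠ w t).card - 1 :=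
              Finset.card_erase_of_mem hzmem
        _ ≤ d := by omega
    exact le_trans (ih u w' hcard' hu0 hw'0 hua hw'a hpfx') hρw'


noncomputable def rder (f : ℝ → ℝ) (x : ℝ) : ℝ :=
  sInf ((fun t => (f t - f x) / (t - x)) '' Set.Ioi x)

section rder
variable {f : ℝ → ℝ}

lemma slope3 (hc : ConvexOn ℝ Set.univ f) {x y z : ℝ} (hxy : x < y) (hyz : y < z) :
    (f y - f x) / (y - x) ≤ (f z - f y) / (z - y) := by
  exact hc.slope_mono_adjacent (Set.mem_univ x) (Set.mem_univ z) hxy hyz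

lemma rder_set_nonempty (f : ℝ → ℝ) (x : ℝ) :
    ((fun t => (f t - f x) / (t - x)) '' Set.Ioi x).Nonempty :=
  ⟨_, ⟨x + 1, by simp, rfl⟩⟩

lemma rder_bddBelow (hm : Monotone f) (x : ℝ) :
    BddBelow ((fun t => (f t - f x) / (t - x)) '' Set.Ioi x) := by
  refine ⟨0, ?_⟩
  rintro _ ⟨t, ht, rfl⟩
  rw [Set.mem_Ioi] at ht
  exact div_nonneg (by linarith [hm ht.le]) (by linarith)

lemma rder_nonneg (hm : Monotone f) (x : ℝ) : 0 ≤ rder f x := by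
  apply le_csInf (rder_set_nonempty f x)
  rintro _ ⟨t, ht, rfl⟩
  rw [Set.mem_Ioi] at ht
  exact div_nonneg (by linarith [hm ht.le]) (by linarith)

lemma rder_le_slope (hm : Monotone f) {x t : ℝ} (ht : x < t) : rder f x ≤ (f t - f x) / (t - x) :=
  csInf_le (rder_bddBelow hm x) ⟨t, ht, rfl⟩

lemma slope_le_rder (hc : ConvexOn ℝ Set.univ f) {t x : ℝ} (ht : t < x) : (f x - f t) / (x - t) ≤ rder f x := by
  apply le_csInf (rder_set_nonempty f x)
  rintro _ ⟨u, hu, rfl⟩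
  rw [Set.mem_Ioi] at hu
  exact slope3 hc ht hu

lemma rder_subgrad (hm : Monotone f) (hc : ConvexOn ℝ Set.univ f) (x t : ℝ) : f x + rder f x * (t - x) ≤ f t := by
  rcases lt_trichotomy t x with h | h | h
  · have h1 := slope_le_rder hc h
    rw [div_le_iff₀ (by linarith : (0:ℝ) < x - t)] at h1
    nlinarith
  · subst h; simp
  · have h1 := rder_le_slope hm h
    rw [le_div_iff₀ (by linarith : (0:ℝ) < t - x)] at h1
    nlinarith

lemma rder_mono (hm : Monotone f) (hc : ConvexOn ℝ Set.univ f) : Monotone (rder f) := by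
  intro x y hxy
  rcases eq_or_lt_of_le hxy with rfl | hxy'
  · exact le_refl _
  apply le_csInf (rder_set_nonempty f y)
  rintro _ ⟨u, hu, rfl⟩
  rw [Set.mem_Ioi] at hu
  calc rder f x ≤ (f y - f x) / (y - x) := rder_le_slope hm hxy'
  _ ≤ (f u - f y) / (u - y) := slope3 hc hxy' hu

end rder

lemma tomic {n : ℕ} {f : ℝ → ℝ} (hm : Monotone f) (hc : ConvexOn ℝ Set.univ f)
    {x y : Fin n → ℝ} (hx : Antitone x) (hsum : ∀ k : ℕ, pfx x k ≤ pfx y k) :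
    ∀ k : ℕ, k ≤ n → pfx (fun j => f (x j)) k ≤ pfx (fun j => f (y j)) k := by
  intro k hk
  set s : ℕ → ℝ := fun t => if h : t < n then rder f (x ⟨t, h⟩) else 0 with hs
  set d : ℕ → ℝ := fun t =>
    (if h : t < n then x ⟨t, h⟩ else 0) - (if h : t < n then y ⟨t, h⟩ else 0) with hd
  have hG : ∀ m : ℕ, ∑ t ∈ Finset.range m, d t = pfx x m - pfx y m := by
    intro m
    rw [pfx, pfx, ← Finset.sum_sub_distrib]
  have hGle : ∀ m : ℕ, ∑ t ∈ Finset.range m, d t ≤ 0 := by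
    intro m; rw [hG]; linarith [hsum m]
  have hs0 : ∀ t, 0 ≤ s t := by
    intro t
    simp only [hs]
    by_cases ht : t < n
    · rw [dif_pos ht]; exact rder_nonneg hm _
    · rw [dif_neg ht]
  have hsmono : ∀ t : ℕ, t + 1 < n → s (t + 1) ≤ s t := by
    intro t ht
    have ht' : t < n := by omega
    simp only [hs, dif_pos ht, dif_pos ht']
    exact rder_mono hm hc (hx (by exact Fin.mk_le_mk.mpr (by omega)))
  have step1 : pfx (fun j => f (x j)) k - pfx (fun j => f (y j)) k ≤
      ∑ t ∈ Finset.range k, s t * d t := by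
    rw [pfx, pfx, ← Finset.sum_sub_distrib]
    apply Finset.sum_le_sum
    intro t ht
    rw [Finset.mem_range] at ht
    have htn : t < n := lt_of_lt_of_le ht hk
    simp only [hs, hd, dif_pos htn]
    have := rder_subgrad hm hc (x ⟨t, htn⟩) (y ⟨t, htn⟩)
    nlinarith [this]
  have step2 : ∑ t ∈ Finset.range k, s t * d t ≤ 0 := by
    have habel := Finset.sum_range_by_parts s d k
    simp only [smul_eq_mul] at habel
    rw [habel]
    have h1 : s (k - 1) * (∑ i ∈ Finset.range k, d i) ≤ 0 :=
      mul_nonpos_of_nonneg_of_nonpos (hs0 _) (hGle k)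
    have h2 : 0 ≤ ∑ i ∈ Finset.range (k - 1), (s (i + 1) - s i) * (∑ t ∈ Finset.range (i+1), d t) := by
      apply Finset.sum_nonneg
      intro i hi
      rw [Finset.mem_range] at hi
      have hin : i + 1 < n := by omega
      have ha : s (i + 1) - s i ≤ 0 := by linarith [hsmono i hin]
      have hb := hGle (i+1)
      nlinarith
    linarith
  linarith [step1, step2]

lemma strictMono_fin_le {k n : ℕ} {g : Fin k → Fin n} (hg : StrictMono g) (j : Fin k) :
    (j : ℕ) ≤ (g j : ℕ) := by
  obtain ⟨jv, hj⟩ := j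
  induction jv with
  | zero => exact Nat.zero_le _
  | succ m ihm =>
    have hm : m < k := by omega
    have h1 := ihm hm
    have h2 : g ⟨m, hm⟩ < g ⟨m+1, hj⟩ := hg (by simp [Fin.lt_def])
    rw [Fin.lt_def] at h2
    simp only [Fin.val_mk] at h1 h2 ⊢
    omega

lemma kyFan_nonempty {k : ℕ} (hk : k ≤ n) :
    ((Finset.univ : Finset (Fin n)).powersetCard k).Nonempty :=
  Finset.powersetCard_nonempty.mpr (by simpa using hk)

noncomputable def kyFan (k : ℕ) (hk : k ≤ n) (v : Fin n → ℝ) : ℝ :=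
  ((Finset.univ : Finset (Fin n)).powersetCard k).sup' (kyFan_nonempty hk)
    (fun s => ∑ i ∈ s, |v i|)

lemma le_kyFan {k : ℕ} (hk : k ≤ n) (v : Fin n → ℝ) {s : Finset (Fin n)}
    (hs : s ∈ (Finset.univ : Finset (Fin n)).powersetCard k) :
    ∑ i ∈ s, |v i| ≤ kyFan k hk v := by
  unfold kyFan
  exact Finset.le_sup' (fun s => ∑ i ∈ s, |v i|) hs

lemma kyFan_le {k : ℕ} (hk : k ≤ n) (v : Fin n → ℝ) {a : ℝ}
    (h : ∀ s ∈ (Finset.univ : Finset (Fin n)).powersetCard k, ∑ i ∈ s, |v i| ≤ a) :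
    kyFan k hk v ≤ a := by
  unfold kyFan
  exact Finset.sup'_le _ _ h

lemma kyFan_perm_le {k : ℕ} (hk : k ≤ n) (σ : Equiv.Perm (Fin n)) (v : Fin n → ℝ) :
    kyFan k hk (v ∘ σ) ≤ kyFan k hk v := by
  apply kyFan_le
  intro s hs
  rw [Finset.mem_powersetCard] at hs
  have himg : s.image σ ∈ (Finset.univ : Finset (Fin n)).powersetCard k := by
    rw [Finset.mem_powersetCard]
    exact ⟨Finset.subset_univ _, by rw [Finset.card_image_of_injective _ σ.injective, hs.2]⟩
  have heq : ∑ i ∈ s, |(v ∘ σ) i| = ∑ i ∈ s.image σ, |v i| := by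
    rw [Finset.sum_image (fun a _ b _ hab => σ.injective hab)]
    rfl
  rw [heq]
  exact le_kyFan hk v himg

lemma kyFan_gauge {k : ℕ} (hk : k ≤ n) : IsSymmetricGauge (kyFan k hk) := by
  refine ⟨?_, ?_, ?_, ?_, ?_⟩
  · intro v
    obtain ⟨s, hs⟩ := kyFan_nonempty (n := n) hk
    exact le_trans (Finset.sum_nonneg fun i _ => abs_nonneg (v i)) (le_kyFan hk v hs)
  · intro c v
    have h1 : kyFan k hk (c • v) = ((Finset.univ : Finset (Fin n)).powersetCard k).sup'
        (kyFan_nonempty hk) (fun s => |c| * ∑ i ∈ s, |v i|) := by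
      unfold kyFan
      apply Finset.sup'_congr _ rfl
      intro s _
      simp [abs_mul, Finset.mul_sum]
    have h2 : |c| * kyFan k hk v = ((Finset.univ : Finset (Fin n)).powersetCard k).sup'
        (kyFan_nonempty hk) (fun s => |c| * ∑ i ∈ s, |v i|) := by
      unfold kyFan
      exact Finset.comp_sup'_eq_sup'_comp _ (fun r => |c| * r)
        (fun x y => mul_max_of_nonneg x y (abs_nonneg c))
    rw [h1, h2]
  · intro v w
    apply kyFan_le
    intro s hs
    calc ∑ i ∈ s, |(v + w) i| ≤ ∑ i ∈ s, (|v i| + |w i|) :=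
          Finset.sum_le_sum fun i _ => abs_add_le _ _
    _ = (∑ i ∈ s, |v i|) + ∑ i ∈ s, |w i| := Finset.sum_add_distrib
    _ ≤ kyFan k hk v + kyFan k hk w := add_le_add (le_kyFan hk v hs) (le_kyFan hk w hs)
  · intro σ v
    refine le_antisymm (kyFan_perm_le hk σ v) ?_
    have h2 := kyFan_perm_le hk σ⁻¹ (v ∘ σ)
    have heq : (v ∘ σ) ∘ (σ⁻¹ : Equiv.Perm (Fin n)) = v := by
      funext i; simp
    rwa [heq] at h2
  · intro v
    unfold kyFan
    apply Finset.sup'_congr _ rfl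
    intro s _
    exact Finset.sum_congr rfl fun i _ => abs_abs (v i)

lemma kyFan_lower {k : ℕ} (hk : k ≤ n) (v : Fin n → ℝ) :
    ∑ j : Fin k, |v (Fin.castLE hk j)| ≤ kyFan k hk v := by
  set s₀ : Finset (Fin n) := Finset.univ.map (Fin.castLEEmb hk) with hs₀
  have hmem : s₀ ∈ (Finset.univ : Finset (Fin n)).powersetCard k := by
    rw [Finset.mem_powersetCard]
    exact ⟨Finset.subset_univ _, by rw [Finset.card_map, Finset.card_univ, Fintype.card_fin]⟩
  have heq : ∑ i ∈ s₀, |v i| = ∑ j : Fin k, |v (Fin.castLE hk j)| := by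
    rw [hs₀, Finset.sum_map]
    rfl
  rw [← heq]
  exact le_kyFan hk v hmem

lemma kyFan_upper {k : ℕ} (hk : k ≤ n) (v : Fin n → ℝ)
    (hv0 : ∀ i, 0 ≤ v i) (hva : Antitone v) :
    kyFan k hk v ≤ ∑ j : Fin k, v (Fin.castLE hk j) := by
  apply kyFan_le
  intro s hs
  rw [Finset.mem_powersetCard] at hs
  obtain ⟨-, hcard⟩ := hs
  have h1 : ∑ i ∈ s, |v i| = ∑ j : Fin k, v (s.orderEmbOfFin hcard j) := by
    rw [← Finset.sum_coe_sort s (fun i => |v i|)]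
    rw [← Equiv.sum_comp (s.orderIsoOfFin hcard).toEquiv
      (fun x : {x // x ∈ s} => |v (x : Fin n)|)]
    apply Finset.sum_congr rfl
    intro j _
    simp only [RelIso.coe_fn_toEquiv]
    rw [Finset.coe_orderIsoOfFin_apply, abs_of_nonneg (hv0 _)]
  rw [h1]
  apply Finset.sum_le_sum
  intro j _
  apply hva
  rw [Fin.le_def]
  exact strictMono_fin_le (s.orderEmbOfFin hcard).strictMono j

end AuxAll


/-- Weak majorization with integral average versus unitarily invariant norms:
(1) if `λ⃗(A) ≺_w ∫ λ⃗(D_τ) dν` and `f` is non-decreasing, convex and nonnegative,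
then `‖f(A)‖_ρ ≤ ∫ ‖f(D_τ)‖_ρ dν` for every symmetric gauge function `ρ`
(where `‖f(H)‖_ρ = ρ(f ∘ λ⃗(H))` since `f` is non-decreasing);
(2) conversely, if the norm inequality holds for every symmetric gauge function and
`f(x) = max (x + c) 0` for all large `c > 0`, then `λ⃗(A) ≺_w ∫ λ⃗(D_τ) dν`. -/
theorem weak_majorization_iff_gauge_norm_ineq {Ω : Type*} [MeasurableSpace Ω]
    (ν : Measure Ω) [IsProbabilityMeasure ν] {n : ℕ}
    {A : Matrix (Fin n) (Fin n) ℂ} (hA : A.IsHermitian)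
    (D : Ω → Matrix (Fin n) (Fin n) ℂ) (hD : ∀ τ, (D τ).IsHermitian)
    (hint : ∀ j : Fin n, Integrable (fun τ => eigsDesc (hD τ) j) ν)
    (hintg : ∀ (g : ℝ → ℝ) (ρ : (Fin n → ℝ) → ℝ), IsSymmetricGauge ρ →
      Integrable (fun τ => ρ (fun j => g (eigsDesc (hD τ) j))) ν) :
    ((∀ k : ℕ, (hk : k ≤ n) →
        ∑ j : Fin k, eigsDesc hA (Fin.castLE hk j) ≤
          ∑ j : Fin k, ∫ τ, eigsDesc (hD τ) (Fin.castLE hk j) ∂ν) →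
      ∀ f : ℝ → ℝ, Monotone f → ConvexOn ℝ Set.univ f → (∀ x, 0 ≤ f x) →
        ∀ ρ : (Fin n → ℝ) → ℝ, IsSymmetricGauge ρ →
          ρ (fun j => f (eigsDesc hA j)) ≤
            ∫ τ, ρ (fun j => f (eigsDesc (hD τ) j)) ∂ν) ∧
    ((∃ c₀ : ℝ, 0 < c₀ ∧ ∀ c : ℝ, c₀ ≤ c →
        ∀ ρ : (Fin n → ℝ) → ℝ, IsSymmetricGauge ρ →
          ρ (fun j => max (eigsDesc hA j + c) 0) ≤
            ∫ τ, ρ (fun j => max (eigsDesc (hD τ) j + c) 0) ∂ν) →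
      ∀ k : ℕ, (hk : k ≤ n) →
        ∑ j : Fin k, eigsDesc hA (Fin.castLE hk j) ≤
          ∑ j : Fin k, ∫ τ, eigsDesc (hD τ) (Fin.castLE hk j) ∂ν) := by
  classical
  have hxa : Antitone (eigsDesc hA) := eigsDesc_antitone hA
  have hla : ∀ τ, Antitone (eigsDesc (hD τ)) := fun τ => eigsDesc_antitone (hD τ)
  constructor
  · -- Part 1
    intro hmaj f hfm hfc hf0 ρ hρ
    set m : Fin n → ℝ := fun j => ∫ τ, eigsDesc (hD τ) j ∂ν with hm
    have hma : Antitone m := by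
      intro a b hab
      exact integral_mono (hint b) (hint a) (fun τ => hla τ hab)
    have hfcont : Continuous f := by
      rw [← continuousOn_univ]
      exact ConvexOn.continuousOn isOpen_univ hfc
    have hpx : ∀ k : ℕ, pfx (eigsDesc hA) k ≤ pfx m k := by
      intro k
      rcases le_or_gt k n with hk | hk
      · rw [← pfx_eq_fin_sum hk, ← pfx_eq_fin_sum hk]
        exact hmaj k hk
      · rw [pfx_stable _ hk.le, pfx_stable _ hk.le,
          ← pfx_eq_fin_sum le_rfl, ← pfx_eq_fin_sum le_rfl]
        exact hmaj n le_rfl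
    have htom : ∀ k : ℕ, pfx (fun j => f (eigsDesc hA j)) k ≤ pfx (fun j => f (m j)) k := by
      intro k
      rcases le_or_gt k n with hk | hk
      · exact tomic hfm hfc hxa hpx k hk
      · rw [pfx_stable _ hk.le, pfx_stable _ hk.le]
        exact tomic hfm hfc hxa hpx n le_rfl
    have hschur : ρ (fun j => f (eigsDesc hA j)) ≤ ρ (fun j => f (m j)) :=
      SG.schur hρ _ _ _ le_rfl (fun i => hf0 _) (fun i => hf0 _)
        (hfm.comp_antitone hxa) (hfm.comp_antitone hma) htom
    have haesm : ∀ j, AEStronglyMeasurable (fun τ => f (eigsDesc (hD τ) j)) ν := fun j =>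
      hfcont.comp_aestronglyMeasurable (hint j).aestronglyMeasurable
    have hintf : ∀ j, Integrable (fun τ => f (eigsDesc (hD τ) j)) ν := by
      intro j
      refine Integrable.mono (hintg f _ absSum_gauge) (haesm j)
        (Filter.Eventually.of_forall fun τ => ?_)
      rw [Real.norm_eq_abs, Real.norm_eq_abs, abs_of_nonneg (hf0 _),
        abs_of_nonneg (Finset.sum_nonneg fun i _ => abs_nonneg _)]
      show f (eigsDesc (hD τ) j) ≤ ∑ i : Fin n, |f (eigsDesc (hD τ) i)|
      exact le_trans (le_abs_self _)
        (Finset.single_le_sum (f := fun i => |f (eigsDesc (hD τ) i)|)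
          (fun i _ => abs_nonneg _) (Finset.mem_univ j))
    have hjensen : ∀ j, f (m j) ≤ ∫ τ, f (eigsDesc (hD τ) j) ∂ν := by
      intro j
      exact ConvexOn.map_integral_le (μ := ν) hfc hfcont.continuousOn isClosed_univ
        (Filter.Eventually.of_forall fun τ => Set.mem_univ _) (hint j) (by exact hintf j)
    have hgvec0 : ∀ j, (0:ℝ) ≤ ∫ τ, f (eigsDesc (hD τ) j) ∂ν := fun j =>
      integral_nonneg fun τ => hf0 _
    have hmono2 : ρ (fun j => f (m j)) ≤ ρ (fun j => ∫ τ, f (eigsDesc (hD τ) j) ∂ν) :=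
      SG.mono_abs hρ fun j => by
        rw [abs_of_nonneg (hf0 _), abs_of_nonneg (hgvec0 j)]
        exact hjensen j
    set F : Ω → Fin n → ℝ := fun τ j => f (eigsDesc (hD τ) j) with hF
    have hFint : Integrable F ν := by
      have hFeq : F = fun τ => ∑ j : Fin n,
          (f (eigsDesc (hD τ) j)) • (Pi.single j 1 : Fin n → ℝ) := by
        funext τ i
        simp only [hF, Finset.sum_apply, Pi.smul_apply, smul_eq_mul]
        rw [Finset.sum_eq_single i]
        · simp
        · intro b _ hb
          simp [Pi.single_apply, Ne.symm hb]
        · simp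
      rw [hFeq]
      apply integrable_finset_sum
      intro j _
      exact (hintf j).smul_const _
    have hcoord : (fun j => ∫ τ, f (eigsDesc (hD τ) j) ∂ν) = ∫ τ, F τ ∂ν := by
      funext j
      have h := (ContinuousLinearMap.proj (R := ℝ) (φ := fun _ : Fin n => ℝ) j).integral_comp_comm hFint
      exact h
    have hρconv : ConvexOn ℝ Set.univ ρ := ⟨convex_univ, fun v _ w _ a b ha hb hab => by
      simpa [smul_eq_mul] using SG.combo hρ v w ha hb⟩
    have hfinal : ρ (fun j => ∫ τ, f (eigsDesc (hD τ) j) ∂ν) ≤ ∫ τ, ρ (F τ) ∂ν := by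
      rw [hcoord]
      exact ConvexOn.map_integral_le (μ := ν) hρconv (SG.continuous hρ).continuousOn
        isClosed_univ (Filter.Eventually.of_forall fun τ => Set.mem_univ _) hFint
        (by exact hintg f ρ hρ)
    exact le_trans hschur (le_trans hmono2 hfinal)
  · -- Part 2
    rintro ⟨c₀, hc₀pos, hc⟩ k hk
    set B : ℝ := ∑ j : Fin n, |eigsDesc hA j| with hB
    have hBj : ∀ j, |eigsDesc hA j| ≤ B := fun j =>
      Finset.single_le_sum (f := fun i => |eigsDesc hA i|)
        (fun i _ => abs_nonneg _) (Finset.mem_univ j)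
    set c₁ : ℝ := max c₀ (B + 1) with hc₁
    have hc₁0 : c₀ ≤ c₁ := le_max_left _ _
    have hpos : ∀ c : ℝ, c₁ ≤ c → ∀ j, 0 < eigsDesc hA j + c := by
      intro c hcge j
      have h1 : -(eigsDesc hA j) ≤ B := le_trans (neg_le_abs _) (hBj j)
      have h2 : B + 1 ≤ c := le_trans (le_max_right c₀ _) hcge
      linarith
    -- key inequality for all c ≥ c₁
    have intadd : ∀ (c : ℝ) (j : Fin n),
        Integrable (fun τ => eigsDesc (hD τ) j + c) ν :=
      fun c j => (hint j).add (integrable_const c)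
    have intmax : ∀ (c : ℝ) (j : Fin n),
        Integrable (fun τ => max (eigsDesc (hD τ) j + c) 0) ν :=
      fun c j => int_maxpos (intadd c j)
    have key : ∀ c : ℝ, c₁ ≤ c →
        ∑ j : Fin k, (eigsDesc hA (Fin.castLE hk j) + c) ≤
          ∑ j : Fin k, ∫ τ, max (eigsDesc (hD τ) (Fin.castLE hk j) + c) 0 ∂ν := by
      intro c hcge
      have step1 : ∑ j : Fin k, (eigsDesc hA (Fin.castLE hk j) + c) ≤
          kyFan k hk (fun j => max (eigsDesc hA j + c) 0) := by
        refine le_trans (le_of_eq ?_) (kyFan_lower hk _)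
        apply Finset.sum_congr rfl
        intro j _
        rw [abs_of_nonneg (le_max_right _ _), max_eq_left (hpos c hcge _).le]
      have step2 : kyFan k hk (fun j => max (eigsDesc hA j + c) 0) ≤
          ∫ τ, kyFan k hk (fun j => max (eigsDesc (hD τ) j + c) 0) ∂ν :=
        hc c (le_trans hc₁0 hcge) (kyFan k hk) (kyFan_gauge hk)
      have step3 : ∫ τ, kyFan k hk (fun j => max (eigsDesc (hD τ) j + c) 0) ∂ν ≤
          ∫ τ, ∑ j : Fin k, max (eigsDesc (hD τ) (Fin.castLE hk j) + c) 0 ∂ν := by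
        apply integral_mono (hintg (fun t => max (t + c) 0) (kyFan k hk) (kyFan_gauge hk))
          (integrable_finset_sum _ fun j _ => intmax c _)
        intro τ
        apply kyFan_upper hk _ (fun i => le_max_right _ _)
        intro a b hab
        exact max_le_max (add_le_add_left (hla τ hab) c) le_rfl
      have step4 : ∫ τ, ∑ j : Fin k, max (eigsDesc (hD τ) (Fin.castLE hk j) + c) 0 ∂ν =
          ∑ j : Fin k, ∫ τ, max (eigsDesc (hD τ) (Fin.castLE hk j) + c) 0 ∂ν :=
        integral_finset_sum _ fun j _ => intmax c _
      calc ∑ j : Fin k, (eigsDesc hA (Fin.castLE hk j) + c) ≤ _ := step1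
      _ ≤ _ := step2
      _ ≤ _ := step3
      _ = _ := step4
    -- split each integral
    have intneg : ∀ (c : ℝ) (j : Fin n),
        Integrable (fun τ => max (-(eigsDesc (hD τ) j + c)) 0) ν :=
      fun c j => int_maxpos (intadd c j).neg
    have hsplit : ∀ (c : ℝ) (j : Fin n),
        (∫ τ, max (eigsDesc (hD τ) j + c) 0 ∂ν) =
          (∫ τ, eigsDesc (hD τ) j ∂ν) + c + ∫ τ, max (-(eigsDesc (hD τ) j + c)) 0 ∂ν := by
      intro c j
      have h1 : (fun τ => max (eigsDesc (hD τ) j + c) 0) =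
          fun τ => (eigsDesc (hD τ) j + c) + max (-(eigsDesc (hD τ) j + c)) 0 := by
        funext τ
        exact max_eq_add_maxneg _
      rw [h1]
      have e1 : ∫ τ, ((eigsDesc (hD τ) j + c) + max (-(eigsDesc (hD τ) j + c)) 0) ∂ν =
          (∫ τ, (eigsDesc (hD τ) j + c) ∂ν) + ∫ τ, max (-(eigsDesc (hD τ) j + c)) 0 ∂ν :=
        integral_add (intadd c j) (intneg c j)
      rw [e1]
      have e2 : ∫ τ, (eigsDesc (hD τ) j + c) ∂ν = (∫ τ, eigsDesc (hD τ) j ∂ν) + c := by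
        rw [integral_add (hint j) (integrable_const c), integral_const]
        simp [measure_univ]
      rw [e2]
    -- the error terms tend to zero
    have herr : ∀ j : Fin n, Filter.Tendsto
        (fun N : ℕ => ∫ τ, max (-(eigsDesc (hD τ) j + (c₁ + N))) 0 ∂ν)
        Filter.atTop (nhds 0) := by
      intro j
      have hT := tendsto_integral_of_dominated_convergence (μ := ν)
        (F := fun (N : ℕ) (τ : Ω) => max (-(eigsDesc (hD τ) j + (c₁ + N))) 0)
        (f := fun _ => (0:ℝ)) (bound := fun τ => |eigsDesc (hD τ) j| + |c₁|)
        ?_ ?_ ?_ ?_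
      · simpa using hT
      · intro N
        have hcont : Continuous (fun t : ℝ => max (-(t + (c₁ + N))) 0) :=
          Continuous.max (continuous_id.add continuous_const).neg continuous_const
        exact hcont.comp_aestronglyMeasurable (hint j).aestronglyMeasurable
      · exact (hint j).abs.add (integrable_const _)
      · intro N
        apply Filter.Eventually.of_forall
        intro τ
        show ‖max (-(eigsDesc (hD τ) j + (c₁ + (N:ℝ)))) 0‖ ≤ |eigsDesc (hD τ) j| + |c₁|
        rw [Real.norm_eq_abs, abs_of_nonneg (le_max_right _ _)]
        apply max_le
        · have h1 : -(eigsDesc (hD τ) j) ≤ |eigsDesc (hD τ) j| := neg_le_abs _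
          have h2 : (0:ℝ) ≤ N := Nat.cast_nonneg N
          have h3 : 0 < c₁ := lt_of_lt_of_le hc₀pos hc₁0
          rw [abs_of_pos h3]
          linarith
        · positivity
      · apply Filter.Eventually.of_forall
        intro τ
        apply Filter.Tendsto.congr' _ tendsto_const_nhds
        rw [Filter.EventuallyEq, Filter.eventually_atTop]
        refine ⟨⌈-(eigsDesc (hD τ) j) - c₁⌉₊, fun N hN => ?_⟩
        have h1 : -(eigsDesc (hD τ) j) - c₁ ≤ N :=
          le_trans (Nat.le_ceil _) (Nat.cast_le.mpr hN)
        show (0:ℝ) = max (-(eigsDesc (hD τ) j + (c₁ + (N:ℝ)))) 0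
        rw [max_eq_right (by linarith)]
    -- conclude
    have hbound : ∀ N : ℕ,
        ∑ j : Fin k, eigsDesc hA (Fin.castLE hk j) ≤
          (∑ j : Fin k, ∫ τ, eigsDesc (hD τ) (Fin.castLE hk j) ∂ν) +
            ∑ j : Fin k, ∫ τ, max (-(eigsDesc (hD τ) (Fin.castLE hk j) + (c₁ + N))) 0 ∂ν := by
      intro N
      have hcge : c₁ ≤ c₁ + N := by
        have : (0:ℝ) ≤ N := Nat.cast_nonneg N
        linarith
      have h1 := key (c₁ + N) hcge
      rw [Finset.sum_add_distrib] at h1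
      have h2 : ∑ j : Fin k, ∫ τ, max (eigsDesc (hD τ) (Fin.castLE hk j) + (c₁ + N)) 0 ∂ν =
          (∑ j : Fin k, ∫ τ, eigsDesc (hD τ) (Fin.castLE hk j) ∂ν) +
            (∑ _j : Fin k, (c₁ + (N:ℝ))) +
            ∑ j : Fin k, ∫ τ, max (-(eigsDesc (hD τ) (Fin.castLE hk j) + (c₁ + N))) 0 ∂ν := by
        rw [← Finset.sum_add_distrib, ← Finset.sum_add_distrib]
        exact Finset.sum_congr rfl fun j _ => hsplit (c₁ + N) _
      rw [h2] at h1
      linarith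
    have hlim : Filter.Tendsto
        (fun N : ℕ => (∑ j : Fin k, ∫ τ, eigsDesc (hD τ) (Fin.castLE hk j) ∂ν) +
          ∑ j : Fin k, ∫ τ, max (-(eigsDesc (hD τ) (Fin.castLE hk j) + (c₁ + N))) 0 ∂ν)
        Filter.atTop (nhds ((∑ j : Fin k, ∫ τ, eigsDesc (hD τ) (Fin.castLE hk j) ∂ν) + 0)) := by
      apply Filter.Tendsto.add tendsto_const_nhds
      have : Filter.Tendsto (fun N : ℕ =>
          ∑ j : Fin k, ∫ τ, max (-(eigsDesc (hD τ) (Fin.castLE hk j) + (c₁ + N))) 0 ∂ν)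
          Filter.atTop (nhds (∑ _j : Fin k, (0:ℝ))) :=
        tendsto_finset_sum _ fun j _ => herr (Fin.castLE hk j)
      simpa using this
    have := ge_of_tendsto' hlim hbound
    simpa using this
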